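/- Let n be a positive integer and u, v ∈ {1,…,n} with v = t·u for some positive integer t such that gcd(t,u) = 1 and t ∣ n. Then v/gcd(v,n) = u/gcd(u,n), and consequently u and v have equal degrees in D_n. -/

import Mathlib

def diophDeg (n u : ℕ) : ℕ :=
  ((Finset.Icc 1 n).filter (fun v => v ≠ u ∧ Nat.gcd u v ∣ n)).card

theorem stmt_19 (n u v t : ℕ) (hn : 0 < n) (ht : 0 < t)
    (hu : u ∈ Finset.Icc 1 n) (hv : v ∈ Finset.Icc 1 n)
    (hvt : v = t * u) (hcop : Nat.gcd t u = 1) (htn : t ∣ n) :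
    v / Nat.gcd v n = u / Nat.gcd u n ∧ diophDeg n u = diophDeg n v := by
  have htc : Nat.Coprime t (Nat.gcd u n) :=
    Nat.Coprime.coprime_dvd_right (Nat.gcd_dvd_left u n) hcop
  have hg : Nat.gcd v n = t * Nat.gcd u n := by
    rw [hvt]
    apply Nat.dvd_antisymm
    · calc Nat.gcd (t * u) n ∣ Nat.gcd t n * Nat.gcd u n := by
            rw [Nat.gcd_comm (t*u) n, Nat.gcd_comm t n, Nat.gcd_comm u n]
            exact Nat.gcd_mul_right_dvd_mul_gcd n t u
        _ = t * Nat.gcd u n := by rw [Nat.gcd_eq_left htn]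
    · exact Nat.dvd_gcd (mul_dvd_mul_left t (Nat.gcd_dvd_left u n))
        (htc.mul_dvd_of_dvd_of_dvd htn (Nat.gcd_dvd_right u n))
  have hpart1 : v / Nat.gcd v n = u / Nat.gcd u n := by
    rw [hg, hvt, Nat.mul_div_mul_left _ _ ht]
  have hequiv : ∀ x, (Nat.gcd v x ∣ n ↔ Nat.gcd u x ∣ n) := by
    intro x
    constructor
    · intro h
      exact dvd_trans (Nat.gcd_dvd_gcd_of_dvd_left x (by rw [hvt]; exact dvd_mul_left u t)) h
    · intro h
      have h1 : Nat.gcd v x ∣ Nat.gcd t x * Nat.gcd u x := by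
        rw [hvt, Nat.gcd_comm (t*u) x, Nat.gcd_comm t x, Nat.gcd_comm u x]
        exact Nat.gcd_mul_right_dvd_mul_gcd x t u
      have hc : Nat.Coprime (Nat.gcd t x) (Nat.gcd u x) :=
        Nat.Coprime.coprime_dvd_left (Nat.gcd_dvd_left t x)
          (Nat.Coprime.coprime_dvd_right (Nat.gcd_dvd_left u x) hcop)
      exact h1.trans (hc.mul_dvd_of_dvd_of_dvd ((Nat.gcd_dvd_left t x).trans htn) h)
  have hguv : Nat.gcd u v = u := by
    rw [hvt]; exact Nat.gcd_eq_left (dvd_mul_left u t)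
  set T := (Finset.Icc 1 n).filter (fun x => Nat.gcd u x ∣ n) with hT
  have hTu : diophDeg n u = (T.erase u).card := by
    unfold diophDeg
    congr 1
    ext x
    simp only [diophDeg, hT, Finset.mem_filter, Finset.mem_erase, Nat.gcd_comm x u]
    tauto
  have hTv : diophDeg n v = (T.erase v).card := by
    unfold diophDeg
    congr 1
    ext x
    simp only [diophDeg, hT, Finset.mem_filter, Finset.mem_erase, Nat.gcd_comm x v,
      hequiv x, Nat.gcd_comm x u]
    tauto
  have huT : u ∈ T ↔ u ∣ n := by
    simp [hT, Finset.mem_filter, Nat.gcd_self, hu]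
  have hvT : v ∈ T ↔ u ∣ n := by
    simp [hT, Finset.mem_filter, hguv, hv]
  refine ⟨hpart1, ?_⟩
  rw [hTu, hTv]
  by_cases hud : u ∣ n
  · rw [Finset.card_erase_of_mem (huT.mpr hud), Finset.card_erase_of_mem (hvT.mpr hud)]
  · rw [Finset.erase_eq_of_notMem (fun h => hud (huT.mp h)),
      Finset.erase_eq_of_notMem (fun h => hud (hvT.mp h))]
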